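/- Let a, b, φ, θ be real numbers with ab ≠ 0 and sin((φ−θ)/2) ≠ 0; set Δ = φ − θ, m_k = a·e^{ikφ} + b·e^{ikθ}, and M_k = |m_k|. Then M_2² + 3M_0² − 4M_1² = 4ab·(cos Δ − 1)² ≠ 0, and the product of amplitudes is recovered by ab = (M_1² − M_0²)² / (M_2² + 3M_0² − 4M_1²). -/

import Mathlib

lemma msq (a b x y : ℝ) :
    ‖(a : ℂ) * Complex.exp (Complex.I * x) +
        (b : ℂ) * Complex.exp (Complex.I * y)‖ ^ 2
      = a ^ 2 + b ^ 2 + 2 * a * b * Real.cos (x - y) := by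
  rw [Complex.sq_norm, Complex.normSq_apply]
  have hx : Complex.I * (x:ℂ) = (x:ℂ) * Complex.I := by ring
  have hy : Complex.I * (y:ℂ) = (y:ℂ) * Complex.I := by ring
  rw [hx, hy, Complex.exp_mul_I, Complex.exp_mul_I]
  simp [Complex.cos_ofReal_re, Complex.sin_ofReal_re, Real.cos_sub]
  ring_nf
  nlinarith [Real.sin_sq_add_cos_sq x, Real.sin_sq_add_cos_sq y]

/-- Recovery of the product of amplitudes: with `m_k = a·e^{ikφ} + b·e^{ikθ}`,
`M_k = |m_k|`, `Δ = φ − θ`, `ab ≠ 0` and `sin(Δ/2) ≠ 0`, one has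
`M₂² + 3M₀² − 4M₁² = 4ab(cos Δ − 1)² ≠ 0` and
`ab = (M₁² − M₀²)²/(M₂² + 3M₀² − 4M₁²)`. -/
theorem amplitude_product_recovery
    (a b φ θ : ℝ) (hab : a * b ≠ 0) (hs : Real.sin ((φ - θ) / 2) ≠ 0)
    (M : ℕ → ℝ)
    (hM : ∀ k : ℕ, M k = ‖(a : ℂ) * Complex.exp (Complex.I * k * φ) +
        (b : ℂ) * Complex.exp (Complex.I * k * θ)‖) :
    M 2 ^ 2 + 3 * M 0 ^ 2 - 4 * M 1 ^ 2 = 4 * a * b * (Real.cos (φ - θ) - 1) ^ 2 ∧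
    M 2 ^ 2 + 3 * M 0 ^ 2 - 4 * M 1 ^ 2 ≠ 0 ∧
    a * b = (M 1 ^ 2 - M 0 ^ 2) ^ 2 / (M 2 ^ 2 + 3 * M 0 ^ 2 - 4 * M 1 ^ 2) := by
  have key : ∀ k : ℕ, M k ^ 2 = a ^ 2 + b ^ 2 + 2 * a * b * Real.cos (k * (φ - θ)) := by
    intro k
    have e1 : Complex.I * (k : ℂ) * (φ : ℂ) = Complex.I * ((k * φ : ℝ) : ℂ) := by
      push_cast; ring
    have e2 : Complex.I * (k : ℂ) * (θ : ℂ) = Complex.I * ((k * θ : ℝ) : ℂ) := by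
      push_cast; ring
    rw [hM k, e1, e2, msq]
    ring_nf
  have h0 := key 0
  have h1 := key 1
  have h2 := key 2
  simp only [Nat.cast_zero, Nat.cast_one, Nat.cast_ofNat, zero_mul, one_mul,
    Real.cos_zero] at h0 h1 h2
  rw [Real.cos_two_mul] at h2
  have hc : Real.cos (φ - θ) - 1 = -2 * Real.sin ((φ - θ) / 2) ^ 2 := by
    have h := Real.sin_sq_eq_half_sub ((φ - θ) / 2)
    rw [show 2 * ((φ - θ) / 2) = φ - θ from by ring] at h
    linarith
  have hcne : Real.cos (φ - θ) - 1 ≠ 0 := by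
    rw [hc]; positivity
  have hD : M 2 ^ 2 + 3 * M 0 ^ 2 - 4 * M 1 ^ 2 = 4 * a * b * (Real.cos (φ - θ) - 1) ^ 2 := by
    rw [h0, h1, h2]; ring
  refine ⟨hD, ?_, ?_⟩
  · rw [hD]
    have : (4 : ℝ) * a * b = 4 * (a * b) := by ring
    rw [this]
    exact mul_ne_zero (mul_ne_zero (by norm_num) hab) (pow_ne_zero 2 hcne)
  · have hDne : 4 * a * b * (Real.cos (φ - θ) - 1) ^ 2 ≠ 0 := by
      have h4 : (4 : ℝ) * a * b = 4 * (a * b) := by ring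
      rw [h4]
      exact mul_ne_zero (mul_ne_zero (by norm_num) hab) (pow_ne_zero 2 hcne)
    rw [hD, h0, h1, eq_div_iff hDne]
    ring
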